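/- Theorem 2.3 (abelian case): Let {A_α}_{α ∈ I} be a family of slender abelian groups. Then the direct sum ⨁_{α ∈ I} A_α is a slender abelian group. -/

import Mathlib

/-- The generalized group operation on `∏_ℕ^g ℤ`. -/
def gmul (x y : ℕ → ℤ) : ℕ → ℤ :=
  fun n => if n % 3 = 1 then x n else if n % 3 = 2 then y n else x n + y n

/-- The local identity map `e` of `∏_ℕ^g ℤ`. -/
def ge (x : ℕ → ℤ) : ℕ → ℤ :=
  fun n => if n % 3 = 0 then 0 else x n

/-- `ind n` is the function that is `1` at `n` and `0` elsewhere. -/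
def ind (n : ℕ) : ℕ → ℤ :=
  fun k => if k = n then 1 else 0

open Finset in
noncomputable def cSeq {B : ℕ → Type*} [∀ k, AddCommGroup (B k)] (a : ∀ k, ℕ → B k) : ℕ → ℤ
  | k =>
    haveI := Classical.propDecidable
    if (∑ j ∈ (Finset.range k).attach, cSeq a j.1 • a k j.1) = 0 then 1 else 0
  termination_by k => k
  decreasing_by all_goals exact Finset.mem_range.mp j.2

open Classical in
lemma cSeq_def {B : ℕ → Type*} [∀ k, AddCommGroup (B k)] (a : ∀ k, ℕ → B k) (k : ℕ) :
    cSeq a k = if (∑ j ∈ Finset.range k, cSeq a j • a k j) = 0 then 1 else 0 := by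
  rw [cSeq]
  congr 1
  · rw [Finset.sum_attach (Finset.range k) (fun j => cSeq a j • a k j)]

lemma exists_c {B : ℕ → Type*} [∀ k, AddCommGroup (B k)] (a : ∀ k, ℕ → B k)
    (ha : ∀ k, a k k ≠ 0) :
    ∃ c : ℕ → ℤ, ∀ k, (∑ j ∈ Finset.range (k+1), c j • a k j) ≠ 0 := by
  classical
  refine ⟨cSeq a, fun k => ?_⟩
  rw [Finset.sum_range_succ]
  by_cases hs : (∑ j ∈ Finset.range k, cSeq a j • a k j) = 0
  · rw [hs, cSeq_def, if_pos hs]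
    simpa using ha k
  · rw [cSeq_def, if_neg hs]
    simpa using hs

/-- decomposition of a hom out of the Baer-Specker group -/
lemma decomp {A : Type*} [AddCommGroup A] (h : (ℕ → ℤ) →+ A) (N : ℕ) (x : ℕ → ℤ) :
    h x = (∑ j ∈ Finset.range N, x j • h (ind j)) + h (fun m => if m < N then 0 else x m) := by
  have hx2 : x = (∑ j ∈ Finset.range N, x j • ind j) + (fun m => if m < N then 0 else x m) := by
    funext m
    simp only [Pi.add_apply, Finset.sum_apply, Pi.smul_apply, ind, smul_eq_mul]
    by_cases hm : m < N
    · rw [if_pos hm]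
      rw [Finset.sum_eq_single m]
      · simp
      · intro j _ hj; simp [Ne.symm hj]
      · intro hmem; exact absurd (Finset.mem_range.mpr hm) hmem
    · rw [if_neg hm]
      rw [Finset.sum_eq_zero, zero_add]
      intro j hj
      have : ¬ (m = j) := by
        intro e; exact hm (e ▸ Finset.mem_range.mp hj)
      simp [this]
  conv_lhs => rw [hx2]
  rw [map_add, map_sum]
  congr 1
  exact Finset.sum_congr rfl (fun j _ => map_zsmul h (x j) (ind j))

/-- Lemma A: a slender group hom kills a tail subgroup. -/
lemma lemA {A : Type*} [AddCommGroup A]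
    (hA : ∀ h : (ℕ → ℤ) →+ A, {n : ℕ | h (ind n) ≠ 0}.Finite)
    (h : (ℕ → ℤ) →+ A) :
    ∃ N : ℕ, ∀ x : ℕ → ℤ, (∀ m, m < N → x m = 0) → h x = 0 := by
  by_contra hc
  push_neg at hc
  choose x hx0 hxne using hc
  let φ : (ℕ → ℤ) →+ (ℕ → ℤ) :=
    { toFun := fun y m => ∑ k ∈ Finset.range (m+1), y k * x k m
      map_zero' := by funext m; simp
      map_add' := by
        intro y z; funext m
        simp [add_mul, Finset.sum_add_distrib] }
  have hφ : ∀ k, φ (ind k) = x k := by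
    intro k
    funext m
    show (∑ j ∈ Finset.range (m+1), ind k j * x j m) = x k m
    have : ∀ j ∈ Finset.range (m+1), ind k j * x j m = if j = k then x k m else 0 := by
      intro j _
      by_cases hj : j = k
      · subst hj; simp [ind]
      · simp [ind, hj]
    rw [Finset.sum_congr rfl this, Finset.sum_ite_eq' (Finset.range (m+1)) k (fun _ => x k m)]
    by_cases hk : k ∈ Finset.range (m+1)
    · rw [if_pos hk]
    · rw [if_neg hk]
      exact (hx0 k m (by simpa using hk)).symm
  have : {n : ℕ | (h.comp φ) (ind n) ≠ 0} = Set.univ := by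
    ext k; simp [hφ k, hxne k]
  have hfin := hA (h.comp φ)
  rw [this] at hfin
  exact Set.infinite_univ hfin


lemma greedy {I : Type*} [Inhabited I] (S : Set ℕ) (hS : S.Infinite) (T : I → Set ℕ)
    (hT : ∀ i, (T i).Finite) (hW : ∀ n ∈ S, ∃ i, n ∈ T i) :
    ∃ (n : ℕ → ℕ) (i : ℕ → I), StrictMono n ∧ (∀ k, n k ∈ T (i k)) ∧
      (∀ k l, l < k → n k ∉ T (i l)) := by
  have key : ∀ (b : ℕ) (L : List I), ∃ p : ℕ × I,
      b < p.1 ∧ p.1 ∈ T p.2 ∧ ∀ j ∈ L, p.1 ∉ T j := by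
    intro b L
    have hfin : (Set.Iic b ∪ ⋃ j ∈ {x | x ∈ L}, T j).Finite :=
      (Set.finite_Iic b).union ((L.finite_toSet).biUnion fun j _ => hT j)
    obtain ⟨m, hmS, hm⟩ := (hS.diff hfin).nonempty
    obtain ⟨i, hi⟩ := hW m hmS
    refine ⟨(m, i), ?_, hi, ?_⟩
    · simp only [Set.mem_diff, Set.mem_union, Set.mem_Iic, not_or] at hm
      exact lt_of_not_ge hm.1
    · intro j hj hTj
      apply hm
      exact Or.inr (Set.mem_biUnion hj hTj)
  choose p hp1 hp2 hp3 using key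
  let st : ℕ → ℕ × List I := fun k =>
    Nat.rec ((p 0 []).1, [(p 0 []).2])
      (fun _ s => ((p s.1 s.2).1, (p s.1 s.2).2 :: s.2)) k
  let n : ℕ → ℕ := fun k => (st k).1
  let i : ℕ → I := fun k => (st k).2.headI
  have hst : ∀ k, st (k+1) = ((p (n k) (st k).2).1, (p (n k) (st k).2).2 :: (st k).2) :=
    fun k => rfl
  have hi_succ : ∀ k, i (k+1) = (p (n k) (st k).2).2 := fun k => rfl
  have hmem : ∀ k, n k ∈ T (i k) := by
    intro k
    cases k with
    | zero => exact hp2 0 []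
    | succ k => exact hp2 (n k) (st k).2
  have hlist : ∀ k l, l ≤ k → i l ∈ (st k).2 := by
    intro k
    induction k with
    | zero => intro l hl; interval_cases l; exact List.mem_singleton.mpr rfl
    | succ k ih =>
      intro l hl
      rw [hst k]
      rcases eq_or_lt_of_le hl with h | h
      · subst h; exact List.mem_cons_self
      · exact List.mem_cons_of_mem _ (ih l (Nat.lt_succ_iff.mp h))
  have hmono : StrictMono n := by
    apply strictMono_nat_of_lt_succ
    intro k
    exact hp1 (n k) (st k).2
  refine ⟨n, i, hmono, hmem, ?_⟩
  intro k l hlk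
  cases k with
  | zero => omega
  | succ k =>
    have hl : l ≤ k := Nat.lt_succ_iff.mp hlk
    exact hp3 (n k) (st k).2 (i l) (hlist k l hl)

theorem directSum_slender {I : Type*} (A : I → Type*) [∀ i, AddCommGroup (A i)]
    (hA : ∀ i, ∀ h : (ℕ → ℤ) →+ A i, {n : ℕ | h (ind n) ≠ 0}.Finite) :
    ∀ h : (ℕ → ℤ) →+ DirectSum I A, {n : ℕ | h (ind n) ≠ 0}.Finite := by
  classical
  intro h
  by_contra hfin
  have hinf : {n : ℕ | h (ind n) ≠ 0}.Infinite := hfin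
  let cmp : ∀ i, DirectSum I A →+ A i := fun i =>
    AddMonoidHom.mk' (fun v => v i) (fun a b => by simp)
  let T : I → Set ℕ := fun i => {m : ℕ | cmp i (h (ind m)) ≠ 0}
  have hT : ∀ i, (T i).Finite := fun i => hA i ((cmp i).comp h)
  have hW : ∀ m ∈ {n : ℕ | h (ind n) ≠ 0}, ∃ i, m ∈ T i := by
    intro m hm
    by_contra hno
    push_neg at hno
    apply hm
    refine DFinsupp.ext fun i => ?_
    have := hno i
    simp only [T, Set.mem_setOf_eq, not_not] at this
    have h2 : (h (ind m)) i = 0 := this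
    simpa using h2
  obtain ⟨m0, hm0⟩ := hinf.nonempty
  haveI : Inhabited I := ⟨(hW m0 hm0).choose⟩
  obtain ⟨n, i, hmono, hmem, hnot⟩ := greedy _ hinf T hT hW
  let φ : (ℕ → ℤ) →+ (ℕ → ℤ) :=
    { toFun := fun y m => ∑ k ∈ Finset.range (m+1), if n k = m then y k else 0
      map_zero' := by funext m; simp
      map_add' := by
        intro y z; funext m
        simp only [Pi.add_apply]
        rw [← Finset.sum_add_distrib]
        refine Finset.sum_congr rfl fun j _ => ?_
        split <;> simp }
  have hφ : ∀ k, φ (ind k) = ind (n k) := by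
    intro k
    funext m
    show (∑ j ∈ Finset.range (m+1), if n j = m then ind k j else 0) = ind (n k) m
    have hcong : ∀ j ∈ Finset.range (m+1),
        (if n j = m then ind k j else 0) = if j = k then (if n k = m then 1 else 0) else 0 := by
      intro j _
      by_cases hj : j = k
      · subst hj; simp [ind]
      · simp [ind, hj]
    rw [Finset.sum_congr rfl hcong,
      Finset.sum_ite_eq' (Finset.range (m+1)) k (fun _ => if n k = m then 1 else 0)]
    by_cases hm : m = n k
    · have hk : k ∈ Finset.range (m+1) := by
        rw [Finset.mem_range, Nat.lt_succ_iff, hm]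
        exact hmono.le_apply
      rw [if_pos hk]
      simp [ind, hm]
    · have : ¬ (n k = m) := fun e => hm e.symm
      simp [ind, hm, this]
  let a : ∀ k, ℕ → A (i k) := fun k j => cmp (i k) (h (ind (n j)))
  have ha : ∀ k, a k k ≠ 0 := fun k => hmem k
  obtain ⟨c, hc⟩ := exists_c a ha
  set v := h (φ c) with hvdef
  have hv : ∀ k, cmp (i k) v ≠ 0 := by
    intro k
    let g : (ℕ → ℤ) →+ A (i k) := ((cmp (i k)).comp h).comp φ
    obtain ⟨N, hN⟩ := lemA (hA (i k)) g
    set M := max N (k+1) with hM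
    have htail : g (fun m => if m < M then 0 else c m) = 0 := by
      apply hN
      intro m hm
      rw [if_pos (lt_of_lt_of_le hm (le_max_left _ _))]
    have hgind : ∀ j, g (ind j) = a k j := by
      intro j
      show cmp (i k) (h (φ (ind j))) = a k j
      rw [hφ j]
    have hgc : cmp (i k) v = g c := rfl
    rw [hgc, decomp g M c, htail, add_zero,
      Finset.sum_congr rfl (fun j _ => by rw [hgind j])]
    have hsub : Finset.range (k+1) ⊆ Finset.range M :=
      Finset.range_subset_range.mpr (le_max_right _ _)
    rw [← Finset.sum_subset hsub ?_]
    · exact hc k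
    · intro j hjM hjk
      have hkj : k < j := by
        simp only [Finset.mem_range, Nat.lt_succ_iff, not_le] at hjk
        exact hjk
      have := hnot j k hkj
      simp only [T, Set.mem_setOf_eq, not_not] at this
      show c j • ((cmp (i k)) (h (ind (n j)))) = 0
      rw [this, smul_zero]
  have hinj : Function.Injective i := by
    intro k l hkl
    by_contra hne
    rcases lt_or_gt_of_ne hne with hlt | hlt
    · exact hnot l k hlt (hkl ▸ hmem l)
    · exact hnot k l hlt (hkl ▸ hmem k)
  have hvfin : {j : I | v j ≠ 0}.Finite := DFinsupp.finite_support v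
  exact (Set.infinite_of_injective_forall_mem hinj (fun k => hv k)) hvfin
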